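/- Tropical mutation rule for the prefactor γ: let m ≥ 1 and let c : ℤ → ℤ satisfy c(j+1) + c(j−m) = max(0, c(j)) + max(0, c(j−m+1)) for all j ∈ ℤ. Define G(j) := min(0, min(c(j), c(j) − c(j−m))). Then for all j ∈ ℤ: G(j+1) = G(j) − min(0, c(j)). -/
import Mathlib


/-- Tropical mutation rule for the prefactor `γ`: with
`G(j) = min(0, min(c(j), c(j) − c(j−m)))` the exponent of a frozen variable in
`γⱼ = 1 ⊕̂ y₁;ⱼ ⊕̂ y₁;ⱼ·(y₁;ⱼ₋ₘ)⁻¹`, one has `G(j+1) = G(j) − min(0, c(j))`. -/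
theorem am1_tropical_prefactor_mutation (m : ℕ) (hm : 1 ≤ m) (c : ℤ → ℤ)
    (hrec : ∀ j : ℤ, c (j + 1) + c (j - m) = max 0 (c j) + max 0 (c (j - m + 1))) :
    ∀ j : ℤ, min 0 (min (c (j + 1)) (c (j + 1) - c (j + 1 - m)))
      = min 0 (min (c j) (c j - c (j - m))) - min 0 (c j) := by
  intro j
  have h := hrec j
  have e1 : (j - (m : ℤ) + 1) = j + 1 - m := by ring
  rw [e1] at h
  omega
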